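/- Fix a nonempty finite type n with decidable equality. Let h, h̃ : ℝ → ℝ with h 0 = 0 and h̃ 0 = 0, and let c > 0 be a real constant. Suppose that for every X : Matrix n n ℂ with hX : X.IsHermitian one has ∑ i, h (hX.eigenvalues i) = c * ∑ i, h̃ (hX.eigenvalues i). Then h t = c * h̃ t for every t : ℝ. -/

import Mathlib

theorem profile_uniqueness
    {n : Type*} [Fintype n] [DecidableEq n] [Nonempty n]
    (h htilde : ℝ → ℝ) (hh0 : h 0 = 0) (hht0 : htilde 0 = 0)
    (c : ℝ) (hc : 0 < c)
    (heq : ∀ (X : Matrix n n ℂ) (hX : X.IsHermitian),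
      ∑ i, h (hX.eigenvalues i) = c * ∑ i, htilde (hX.eigenvalues i)) :
    ∀ t : ℝ, h t = c * htilde t := by
  intro t
  set X : Matrix n n ℂ := (t : ℂ) • (1 : Matrix n n ℂ) with hXdef
  have hX : X.IsHermitian := by
    unfold Matrix.IsHermitian
    rw [hXdef, Matrix.conjTranspose_smul]
    simp
  have heig : ∀ i, hX.eigenvalues i = t := by
    intro i
    have hmv := hX.mulVec_eigenvectorBasis i
    have hmv2 : X.mulVec ((WithLp.equiv 2 (n → ℂ)) (hX.eigenvectorBasis i))
        = (t : ℂ) • (WithLp.equiv 2 (n → ℂ)) (hX.eigenvectorBasis i) := by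
      show ((t : ℂ) • (1 : Matrix n n ℂ)).mulVec _ = _
      rw [Matrix.smul_mulVec, Matrix.one_mulVec]
    have hmv3 := hmv2.symm.trans hmv
    have hne : (WithLp.equiv 2 (n → ℂ)) (hX.eigenvectorBasis i) ≠ 0 :=
      fun h0 => hX.eigenvectorBasis.orthonormal.ne_zero i
        ((WithLp.equiv 2 (n → ℂ)).injective (h0.trans rfl))
    obtain ⟨j, hj⟩ : ∃ j, (WithLp.equiv 2 (n → ℂ)) (hX.eigenvectorBasis i) j ≠ 0 := by
      by_contra hcon
      push_neg at hcon
      exact hne (funext hcon)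
    have hj2 := congrFun hmv3 j
    simp only [Pi.smul_apply, Complex.real_smul, smul_eq_mul] at hj2
    have : (t : ℂ) = (hX.eigenvalues i : ℂ) := mul_right_cancel₀ hj hj2
    exact_mod_cast this.symm
  have := heq X hX
  simp only [heig] at this
  rw [Finset.sum_const, Finset.sum_const, Finset.card_univ, nsmul_eq_mul, nsmul_eq_mul] at this
  have hcard : ((Fintype.card n : ℝ)) ≠ 0 := by
    exact_mod_cast Fintype.card_ne_zero
  refine mul_left_cancel₀ hcard ?_
  rw [this]; ring
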